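/- Let N = (ℤ/25ℤ) ⋊ ℤ with the ℤ-generator acting by multiplication by 6, and N' = (ℤ/25ℤ) ⋊ ℤ with the ℤ-generator acting by multiplication by 11. Then the direct products N × ℤ and N' × ℤ are isomorphic. -/
import Mathlib


/-- The automorphism of `Multiplicative (ZMod 25)` given by multiplication by the unit `u`. -/
def mulBy25 (u : (ZMod 25)ˣ) : MulAut (Multiplicative (ZMod 25)) :=
  AddEquiv.toMultiplicative (AddAut.mulLeft u)

/-- The action of `ℤ` on `ℤ/25ℤ` in which the generator acts by multiplication by `u`. -/
def act25 (u : (ZMod 25)ˣ) : Multiplicative ℤ →* MulAut (Multiplicative (ZMod 25)) :=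
  zpowersHom (MulAut (Multiplicative (ZMod 25))) (mulBy25 u)

private abbrev U6 : (ZMod 25)ˣ := ZMod.unitOfCoprime 6 (by decide)
private abbrev U11 : (ZMod 25)ˣ := ZMod.unitOfCoprime 11 (by decide)

lemma mulBy25_mul (u v : (ZMod 25)ˣ) : mulBy25 (u * v) = mulBy25 u * mulBy25 v := by
  ext a
  simp [mulBy25, AddAut.mulLeft, mul_smul]

lemma l1 : mulBy25 U11 = (mulBy25 U6) ^ 2 := by
  have : U11 = U6 * U6 := by decide
  rw [this, mulBy25_mul, sq]

lemma l2 : (mulBy25 U6) ^ 5 = 1 := by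
  have h : U6 ^ 5 = 1 := by decide
  ext a
  have : mulBy25 U6 ^ 5 = mulBy25 (U6 ^ 5) := by
    rw [show U6 ^ 5 = U6 * (U6 * (U6 * (U6 * U6))) from by
        rw [pow_succ', pow_succ', pow_succ', pow_succ', pow_one],
      mulBy25_mul, mulBy25_mul, mulBy25_mul, mulBy25_mul,
      pow_succ', pow_succ', pow_succ', pow_succ', pow_one]
  rw [this, h]
  simp [mulBy25, AddAut.mulLeft]

lemma act_eq (m n : ℤ) :
    act25 U11 (.ofAdd (3 * m + 5 * n)) = act25 U6 (.ofAdd m) := by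
  simp only [act25, zpowersHom_apply, toAdd_ofAdd]
  rw [l1, ← zpow_natCast (mulBy25 U6) 2, ← zpow_mul,
    show ((2 : ℕ) : ℤ) * (3 * m + 5 * n) = m + 5 * (m + 2 * n) by push_cast; ring,
    zpow_add, zpow_mul, show ((5:ℤ)) = ((5:ℕ):ℤ) from rfl, zpow_natCast, l2, one_zpow, mul_one]

lemma act_eq' (m n : ℤ) :
    act25 U6 (.ofAdd (2 * m - 5 * n)) = act25 U11 (.ofAdd m) := by
  rw [← act_eq (2 * m - 5 * n) (-m + 3 * n)]
  congr 1
  show Multiplicative.ofAdd _ = Multiplicative.ofAdd _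
  congr 1
  ring

/-- With `N = (ℤ/25ℤ) ⋊ ℤ` (generator acting by multiplication by `6`) and
`N' = (ℤ/25ℤ) ⋊ ℤ` (generator acting by multiplication by `11`), the direct products
`N × ℤ` and `N' × ℤ` are isomorphic. -/
theorem stmt_5 :
    Nonempty
      (((Multiplicative (ZMod 25) ⋊[act25 (ZMod.unitOfCoprime 6 (by decide))]
            Multiplicative ℤ) × Multiplicative ℤ) ≃*
        ((Multiplicative (ZMod 25) ⋊[act25 (ZMod.unitOfCoprime 11 (by decide))]
            Multiplicative ℤ) × Multiplicative ℤ)) := by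
  refine ⟨{
    toFun := fun p => (⟨p.1.left, .ofAdd (3 * p.1.right.toAdd + 5 * p.2.toAdd)⟩,
      .ofAdd (p.1.right.toAdd + 2 * p.2.toAdd)),
    invFun := fun p => (⟨p.1.left, .ofAdd (2 * p.1.right.toAdd - 5 * p.2.toAdd)⟩,
      .ofAdd (-p.1.right.toAdd + 3 * p.2.toAdd)),
    left_inv := ?_, right_inv := ?_, map_mul' := ?_ }⟩
  · rintro ⟨⟨a, m⟩, n⟩
    refine Prod.ext (SemidirectProduct.ext rfl ?_) ?_
    · simp only [toAdd_ofAdd]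
      rw [show 2 * (3 * Multiplicative.toAdd m + 5 * Multiplicative.toAdd n) -
        5 * (Multiplicative.toAdd m + 2 * Multiplicative.toAdd n) = Multiplicative.toAdd m
        from by ring, ofAdd_toAdd]
    · simp only [toAdd_ofAdd]
      rw [show -(3 * Multiplicative.toAdd m + 5 * Multiplicative.toAdd n) +
        3 * (Multiplicative.toAdd m + 2 * Multiplicative.toAdd n) = Multiplicative.toAdd n
        from by ring, ofAdd_toAdd]
  · rintro ⟨⟨a, m⟩, n⟩
    refine Prod.ext (SemidirectProduct.ext rfl ?_) ?_
    · simp only [toAdd_ofAdd]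
      rw [show 3 * (2 * Multiplicative.toAdd m - 5 * Multiplicative.toAdd n) +
        5 * (-Multiplicative.toAdd m + 3 * Multiplicative.toAdd n) = Multiplicative.toAdd m
        from by ring, ofAdd_toAdd]
    · simp only [toAdd_ofAdd]
      rw [show 2 * Multiplicative.toAdd m - 5 * Multiplicative.toAdd n +
        2 * (-Multiplicative.toAdd m + 3 * Multiplicative.toAdd n) = Multiplicative.toAdd n
        from by ring, ofAdd_toAdd]
  · rintro ⟨⟨a, m⟩, n⟩ ⟨⟨b, p⟩, q⟩
    dsimp only
    simp only [Prod.mk_mul_mk, SemidirectProduct.mul_left, SemidirectProduct.mul_right,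
      toAdd_ofAdd, toAdd_mul]
    refine Prod.ext (SemidirectProduct.ext ?_ ?_) ?_
    · show _ = _ * (act25 _ _) _
      rw [act_eq (Multiplicative.toAdd m) (Multiplicative.toAdd n)]
      rfl
    · show Multiplicative.ofAdd _ = Multiplicative.toAdd _ |> Multiplicative.ofAdd
      simp only [SemidirectProduct.mul_right, toAdd_mul, toAdd_ofAdd]
      congr 1
      ring
    · show Multiplicative.ofAdd _ = _ * _
      rw [← ofAdd_add]
      congr 1
      ring
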